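/- Let (G_α)_{α∈addr(t)} be a concrete evaluation of a tree t ∈ T_Σ into a graph G, where all operations are union or extension operations satisfying requirements (R1) and (R2), or the constant φ. Then for every address α ∈ addr(t), and every edge e of G whose source src(e) lies in the node set V_α of G_α, the edge e belongs to the edge set E_α of G_α. -/

import Mathlib

structure PGraph (ν Ld Lb : Type) where
  V : Set ν
  E : Set (ν × Lb × ν)
  lab : ν → Ld
  port : List ν

def PGraph.IsEmptyGraph {ν Ld Lb : Type} (G : PGraph ν Ld Lb) : Prop :=
  G.V = ∅ ∧ G.E = ∅ ∧ G.port = []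

def CloneWitness {ν Ld Lb : Type} (G : PGraph ν Ld Lb) (C : Set ν) (Cv : ν → Set ν)
    (G' : PGraph ν Ld Lb) : Prop :=
  (∀ v, v ∈ G.V → v ∉ C → Cv v = {v}) ∧
  (∀ u v, u ∈ G.V → v ∈ G.V → u ≠ v → Disjoint (Cv u) (Cv v)) ∧
  G'.V = (⋃ v ∈ G.V, Cv v) ∧
  G'.E = {e | ∃ u ℓ w, (u, ℓ, w) ∈ G.E ∧ e.1 ∈ Cv u ∧ e.2.1 = ℓ ∧ e.2.2 ∈ Cv w} ∧
  (∀ v, v ∈ G.V → ∀ v' ∈ Cv v, G'.lab v' = G.lab v) ∧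
  G'.port = G.port

def Clone {ν Ld Lb : Type} (G : PGraph ν Ld Lb) (C : Set ν) : Set (PGraph ν Ld Lb) :=
  {G' | ∃ Cv, CloneWitness G C Cv G'}

structure ExpOp (ν Ld Lb : Type) where
  V : Set ν
  E : Set (ν × Lb × ν)
  lab : ν → Ld
  port : List ν
  dock : List ν
  C : Set ν
  E_sub : ∀ e ∈ E, e.1 ∈ V ∧ e.2.2 ∈ V
  port_nodup : port.Nodup
  dock_nodup : dock.Nodup
  port_sub : ∀ v ∈ port, v ∈ V
  dock_sub : ∀ v ∈ dock, v ∈ V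
  C_sub : C ⊆ V \ ({v | v ∈ port} ∪ {v | v ∈ dock})

namespace ExpOp
variable {ν Ld Lb : Type}

def und (Φ : ExpOp ν Ld Lb) : PGraph ν Ld Lb := ⟨Φ.V, Φ.E, Φ.lab, Φ.port⟩

def NEW (Φ : ExpOp ν Ld Lb) : Set ν := {v | v ∈ Φ.port} \ {v | v ∈ Φ.dock}

def CONT (Φ : ExpOp ν Ld Lb) : Set ν := Φ.V \ ({v | v ∈ Φ.port} ∪ {v | v ∈ Φ.dock})

/-- (R1): every edge source lies in NEW. -/
def R1 (Φ : ExpOp ν Ld Lb) : Prop := ∀ e ∈ Φ.E, e.1 ∈ Φ.NEW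

/-- (R2): every dock node that is not a port is the target of some edge. -/
def R2 (Φ : ExpOp ν Ld Lb) : Prop := ∀ v ∈ Φ.dock, v ∉ Φ.port → ∃ e ∈ Φ.E, e.2.2 = v

/-- (R3): no isolated context nodes. -/
def R3 (Φ : ExpOp ν Ld Lb) : Prop := ∀ v ∈ Φ.V, v ∉ Φ.port → ∃ e ∈ Φ.E, e.2.2 = v

end ExpOp

def Apply {ν Ld Lb : Type} (Φ : ExpOp ν Ld Lb) (G H : PGraph ν Ld Lb) : Prop :=
  G.port.length = Φ.dock.length ∧
  ∃ (Cv : ν → Set ν) (G'' : PGraph ν Ld Lb) (μ : ν → ν),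
    CloneWitness Φ.und Φ.C Cv G'' ∧
    Set.InjOn μ G''.V ∧
    (∀ v ∈ Φ.NEW, μ v ∉ G.V) ∧
    Φ.dock.map μ = G.port ∧
    (∀ v ∈ Φ.CONT, ∀ v' ∈ Cv v, μ v' ∈ G.V ∧ μ v' ∉ {x | x ∈ G.port} ∧
      G.lab (μ v') = Φ.lab v) ∧
    H.V = G.V ∪ μ '' G''.V ∧
    H.E = G.E ∪ {e | ∃ e' ∈ G''.E, e = (μ e'.1, e'.2.1, μ e'.2.2)} ∧
    (∀ v ∈ G.V, H.lab v = G.lab v) ∧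
    (∀ v' ∈ G''.V, μ v' ∉ G.V → H.lab (μ v') = G''.lab v') ∧
    H.port = G''.port.map μ

def UnionOf {ν Ld Lb : Type} (G₁ G₂ H : PGraph ν Ld Lb) : Prop :=
  Disjoint G₁.V G₂.V ∧
  H.V = G₁.V ∪ G₂.V ∧
  H.E = G₁.E ∪ G₂.E ∧
  (∀ v ∈ G₁.V, H.lab v = G₁.lab v) ∧
  (∀ v ∈ G₂.V, H.lab v = G₂.lab v) ∧
  H.port = G₁.port ++ G₂.port

def Subgraph {ν Ld Lb : Type} (G' G : PGraph ν Ld Lb) : Prop :=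
  G'.V ⊆ G.V ∧ G'.E ⊆ G.E ∧ (∀ v ∈ G'.V, G'.lab v = G.lab v)

def PGraph.step {ν Ld Lb : Type} (G : PGraph ν Ld Lb) (u v : ν) : Prop :=
  ∃ ℓ, (u, ℓ, v) ∈ G.E

/-- Nodes reachable in `G` by directed paths from the nodes occurring in `p`. -/
def PGraph.reachSet {ν Ld Lb : Type} (G : PGraph ν Ld Lb) (p : List ν) : Set ν :=
  {v | ∃ u ∈ p, Relation.ReflTransGen G.step u v}

/-- `G↓p`: the subgraph of `G` induced by the nodes reachable from `p`, with port sequence `p`. -/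
def PGraph.restrictReach {ν Ld Lb : Type} (G : PGraph ν Ld Lb) (p : List ν) : PGraph ν Ld Lb :=
  ⟨G.reachSet p, {e | e ∈ G.E ∧ e.1 ∈ G.reachSet p ∧ e.2.2 ∈ G.reachSet p}, G.lab, p⟩

inductive OpTree (ν Ld Lb : Type) : Type where
  | phi : OpTree ν Ld Lb
  | ext : ExpOp ν Ld Lb → OpTree ν Ld Lb → OpTree ν Ld Lb
  | union : OpTree ν Ld Lb → OpTree ν Ld Lb → OpTree ν Ld Lb

namespace OpTree
variable {ν Ld Lb : Type}

def subtree : OpTree ν Ld Lb → List ℕ → Option (OpTree ν Ld Lb)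
  | t, [] => some t
  | .ext _ t, 1 :: α => t.subtree α
  | .union t₁ _, 1 :: α => t₁.subtree α
  | .union _ t₂, 2 :: α => t₂.subtree α
  | _, _ => none

def Addr (t : OpTree ν Ld Lb) (α : List ℕ) : Prop := (t.subtree α).isSome

def ops : OpTree ν Ld Lb → Set (ExpOp ν Ld Lb)
  | .phi => ∅
  | .ext Φ t => insert Φ t.ops
  | .union t₁ t₂ => t₁.ops ∪ t₂.ops

end OpTree

/-- A concrete evaluation of the tree `t` into the graph `G`: a family of subgraphs of `G`
(indexed by Gorn addresses, with no renaming of nodes) with `ev [] = G`, respecting the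
operations labelling `t`. -/
def ConcreteEval {ν Ld Lb : Type} (t : OpTree ν Ld Lb) (G : PGraph ν Ld Lb)
    (ev : List ℕ → PGraph ν Ld Lb) : Prop :=
  ev [] = G ∧
  ∀ α, t.Addr α →
    Subgraph (ev α) G ∧
    (t.subtree α = some .phi → (ev α).IsEmptyGraph) ∧
    (∀ Φ t', t.subtree α = some (.ext Φ t') → Apply Φ (ev (α ++ [1])) (ev α)) ∧
    (∀ t₁ t₂, t.subtree α = some (.union t₁ t₂) →
      UnionOf (ev (α ++ [1])) (ev (α ++ [2])) (ev α))

theorem OpTree.subtree_append {ν Ld Lb : Type} (t : OpTree ν Ld Lb) (α β : List ℕ) :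
    t.subtree (α ++ β) = (t.subtree α).bind (·.subtree β) := by
  induction α generalizing t with
  | nil => simp [OpTree.subtree]
  | cons a α ih =>
    cases t with
    | phi =>
      rcases a with _ | _ | a <;> simp [OpTree.subtree]
    | ext Φ t' =>
      rcases a with _ | _ | a <;> simp [OpTree.subtree, ih]
    | union t₁ t₂ =>
      rcases a with _ | _ | _ | a <;> simp [OpTree.subtree, ih]

theorem OpTree.ops_of_subtree {ν Ld Lb : Type} {t s : OpTree ν Ld Lb} {α : List ℕ}
    (h : t.subtree α = some s) : s.ops ⊆ t.ops := by
  induction α generalizing t with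
  | nil => simp [OpTree.subtree] at h; subst h; exact le_refl _
  | cons a α ih =>
    cases t with
    | phi => rcases a with _ | _ | a <;> simp [OpTree.subtree] at h
    | ext Φ t' =>
      rcases a with _ | _ | a <;> simp [OpTree.subtree] at h
      exact (ih h).trans (Set.subset_insert _ _)
    | union t₁ t₂ =>
      rcases a with _ | _ | _ | a <;> simp [OpTree.subtree] at h
      · exact (ih h).trans Set.subset_union_left
      · exact (ih h).trans Set.subset_union_right

theorem src_mem_of_concreteEval {ν Ld Lb : Type} {t : OpTree ν Ld Lb}
    {G : PGraph ν Ld Lb} {ev : List ℕ → PGraph ν Ld Lb}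
    (h : ConcreteEval t G ev) :
    ∀ s : OpTree ν Ld Lb, ∀ α, t.subtree α = some s →
      ∀ e ∈ (ev α).E, e.1 ∈ (ev α).V := by
  intro s
  induction s with
  | phi =>
    intro α hα e he
    have haddr : t.Addr α := by simp [OpTree.Addr, hα]
    have hE := ((h.2 α haddr).2.1 hα).2.1
    rw [hE] at he
    exact absurd he (Set.notMem_empty _)
  | ext Φ t' ih =>
    intro α hα e he
    have haddr : t.Addr α := by simp [OpTree.Addr, hα]
    have happ : Apply Φ (ev (α ++ [1])) (ev α) := (h.2 α haddr).2.2.1 Φ t' hα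
    obtain ⟨_, Cv, G'', μ, hCW, _, _, _, _, hV, hE, _⟩ := happ
    have hα1 : t.subtree (α ++ [1]) = some t' := by
      rw [OpTree.subtree_append, hα]; simp [OpTree.subtree]
    rw [hE] at he
    rw [hV]
    rcases he with he | ⟨e', he', heq⟩
    · exact Or.inl (ih (α ++ [1]) hα1 e he)
    · right
      refine ⟨e'.1, ?_, by rw [heq]⟩
      rw [hCW.2.2.2.1] at he'
      rw [hCW.2.2.1]
      obtain ⟨u, ℓ, w, huw, h1, _, _⟩ := he'
      exact Set.mem_biUnion (Φ.E_sub _ huw).1 h1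
  | union t₁ t₂ ih₁ ih₂ =>
    intro α hα e he
    have haddr : t.Addr α := by simp [OpTree.Addr, hα]
    obtain ⟨_, hV, hE, _⟩ := (h.2 α haddr).2.2.2 t₁ t₂ hα
    have hα1 : t.subtree (α ++ [1]) = some t₁ := by
      rw [OpTree.subtree_append, hα]; simp [OpTree.subtree]
    have hα2 : t.subtree (α ++ [2]) = some t₂ := by
      rw [OpTree.subtree_append, hα]; simp [OpTree.subtree]
    rw [hE] at he
    rw [hV]
    rcases he with he | he
    · exact Or.inl (ih₁ (α ++ [1]) hα1 e he)
    · exact Or.inr (ih₂ (α ++ [2]) hα2 e he)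

/-- Claim 1 of the Reachability Lemma: in a concrete evaluation of `t` into `G`
(all operations being `φ`, unions, or extension operations satisfying (R1) and (R2)),
every edge of `G` whose source lies in `V_α` belongs to `E_α`. -/
theorem edges_from_evaluated_nodes {ν Ld Lb : Type} (t : OpTree ν Ld Lb)
    (G : PGraph ν Ld Lb) (ev : List ℕ → PGraph ν Ld Lb)
    (hops : ∀ Φ ∈ t.ops, Φ.R1 ∧ Φ.R2)
    (h : ConcreteEval t G ev) :
    ∀ α, t.Addr α → ∀ e ∈ G.E, e.1 ∈ (ev α).V → e ∈ (ev α).E := by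
  intro α
  induction α using List.reverseRecOn with
  | nil => intro _ e he _; rw [h.1]; exact he
  | append_singleton α i ihα =>
    intro haddr e heG hsrc
    rw [OpTree.Addr, OpTree.subtree_append] at haddr
    obtain ⟨s, hs⟩ : ∃ s, t.subtree α = some s := by
      cases hts : t.subtree α with
      | none => rw [hts] at haddr; exact absurd haddr (by simp)
      | some s => exact ⟨s, rfl⟩
    rw [hs] at haddr
    have haddrα : t.Addr α := by simp [OpTree.Addr, hs]
    cases s with
    | phi =>
      rcases i with _ | _ | i <;> simp [Option.isSome, OpTree.subtree] at haddr
    | ext Φ t' =>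
      rcases i with _ | _ | i <;> simp [Option.isSome, OpTree.subtree] at haddr
      -- i = 1
      have happ : Apply Φ (ev (α ++ [1])) (ev α) := (h.2 α haddrα).2.2.1 Φ t' hs
      obtain ⟨_, Cv, G'', μ, hCW, _, hnew, _, _, hV, hE, _⟩ := happ
      have heα : e ∈ (ev α).E := by
        apply ihα haddrα e heG
        rw [hV]; exact Or.inl hsrc
      rw [hE] at heα
      rcases heα with heα | ⟨e', he', heq⟩
      · exact heα
      · exfalso
        rw [hCW.2.2.2.1] at he'
        obtain ⟨u, ℓ, w, huw, h1, _, _⟩ := he'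
        have hR1 : Φ.R1 :=
          (hops Φ (OpTree.ops_of_subtree hs (Set.mem_insert _ _))).1
        have huNEW : u ∈ Φ.NEW := hR1 _ huw
        have huV : u ∈ Φ.und.V := (Φ.E_sub _ huw).1
        have huC : u ∉ Φ.C := fun hc =>
          ((Φ.C_sub hc).2 : _) (Or.inl huNEW.1)
        have hCu : Cv u = {u} := hCW.1 u huV huC
        rw [hCu] at h1
        have : e.1 = μ u := by rw [heq, h1]
        exact hnew u huNEW (this ▸ hsrc)
    | union t₁ t₂ =>
      obtain ⟨_, hV, hE, _⟩ := (h.2 α haddrα).2.2.2 t₁ t₂ hs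
      have hdisj : Disjoint (ev (α ++ [1])).V (ev (α ++ [2])).V :=
        ((h.2 α haddrα).2.2.2 t₁ t₂ hs).1
      have hα1 : t.subtree (α ++ [1]) = some t₁ := by
        rw [OpTree.subtree_append, hs]; simp [OpTree.subtree]
      have hα2 : t.subtree (α ++ [2]) = some t₂ := by
        rw [OpTree.subtree_append, hs]; simp [OpTree.subtree]
      have heα : e ∈ (ev α).E := by
        apply ihα haddrα e heG
        rw [hV]
        rcases i with _ | _ | _ | i <;>
          simp [Option.isSome, OpTree.subtree] at haddr
        · exact Or.inl hsrc
        · exact Or.inr hsrc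
      rw [hE] at heα
      rcases i with _ | _ | _ | i <;>
        simp [Option.isSome, OpTree.subtree] at haddr
      · -- i = 1
        rcases heα with heα | heα
        · exact heα
        · exfalso
          have : e.1 ∈ (ev (α ++ [2])).V :=
            src_mem_of_concreteEval h t₂ (α ++ [2]) hα2 e heα
          exact Set.disjoint_left.mp hdisj hsrc this
      · -- i = 2
        rcases heα with heα | heα
        · exfalso
          have : e.1 ∈ (ev (α ++ [1])).V :=
            src_mem_of_concreteEval h t₁ (α ++ [1]) hα1 e heα
          exact Set.disjoint_left.mp hdisj this hsrc
        · exact heα
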